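/- All posterior central moments μ_k(y) of log x in the Poisson model are uniquely determined by the function μ₁(y) = E[log x | y] and its derivatives: specifically, μ₂ = μ₁', μ₃ = μ₁'', and each μ_{k+1} is obtained from μ_k' plus products of lower-order moments via μ_{k+1} = μ_k' + k μ₂ μ_{k−1} (k ≥ 3). -/

import Mathlib

open MeasureTheory Set

/-- digamma function ψ = (log Γ)' -/
noncomputable def digamma (t : ℝ) : ℝ := deriv (fun s => Real.log (Real.Gamma s)) t

/-- Poisson likelihood continuously extended to real observations. -/
noncomputable def plik (x y : ℝ) : ℝ := x ^ y * Real.exp (-x) / Real.Gamma (y + 1)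

/-- marginal density of the observation -/
noncomputable def marg (px : ℝ → ℝ) (t : ℝ) : ℝ := ∫ x in Set.Ioi (0:ℝ), plik x t * px x

/-- posterior expectation E[f(x) | y = t] -/
noncomputable def postExp (px : ℝ → ℝ) (f : ℝ → ℝ) (t : ℝ) : ℝ :=
  (∫ x in Set.Ioi (0:ℝ), f x * plik x t * px x) / marg px t

/-- k-th posterior central moment of log x -/
noncomputable def cmom (px : ℝ → ℝ) (k : ℕ) (t : ℝ) : ℝ :=
  (∫ x in Set.Ioi (0:ℝ), (Real.log x - postExp px Real.log t) ^ k * plik x t * px x) / marg px t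


lemma plik_nonneg {x t : ℝ} (hx : 0 < x) (ht : -1 < t) : 0 ≤ plik x t := by
  have hΓ : 0 < Real.Gamma (t + 1) := Real.Gamma_pos_of_pos (by linarith)
  exact div_nonneg (mul_nonneg (Real.rpow_nonneg hx.le _) (Real.exp_nonneg _)) hΓ.le

lemma plik_hasDerivAt (x t : ℝ) (hx : 0 < x) (ht : -1 < t) :
    HasDerivAt (fun s => plik x s) ((Real.log x - digamma (t + 1)) * plik x t) t := by
  have hΓpos : 0 < Real.Gamma (t + 1) := Real.Gamma_pos_of_pos (by linarith)
  have hΓd : DifferentiableAt ℝ Real.Gamma (t + 1) := by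
    apply Real.differentiableAt_Gamma
    intro m h
    have h0 : (0:ℝ) < t + 1 := by linarith
    rw [h] at h0
    have h1 : (0:ℝ) ≤ m := Nat.cast_nonneg m
    linarith
  have hΓ : HasDerivAt Real.Gamma (deriv Real.Gamma (t + 1)) (t + 1) := hΓd.hasDerivAt
  have hψ : digamma (t + 1) = deriv Real.Gamma (t + 1) / Real.Gamma (t + 1) :=
    (hΓ.log hΓpos.ne').deriv
  have hg : HasDerivAt (fun s : ℝ => Real.Gamma (s + 1)) (deriv Real.Gamma (t + 1)) t := by
    have h := hΓ.comp t ((hasDerivAt_id t).add_const 1)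
    rw [mul_one] at h
    exact h
  have hb : HasDerivAt (fun s : ℝ => x ^ s) (x ^ t * Real.log x) t := by
    have he : (fun s : ℝ => x ^ s) = fun s => Real.exp (Real.log x * s) := by
      funext s; exact Real.rpow_def_of_pos hx s
    rw [he]
    have h1 : HasDerivAt (fun s : ℝ => Real.exp (Real.log x * s))
        (Real.exp (Real.log x * t) * Real.log x) t :=
      (Real.hasDerivAt_exp (Real.log x * t)).comp t
        (by simpa using (hasDerivAt_id t).const_mul (Real.log x))
    rw [Real.rpow_def_of_pos hx]
    exact h1
  have hnum : HasDerivAt (fun s : ℝ => x ^ s * Real.exp (-x))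
      (x ^ t * Real.log x * Real.exp (-x)) t := hb.mul_const _
  have hq := hnum.div hg hΓpos.ne'
  have hv : (x ^ t * Real.log x * Real.exp (-x) * Real.Gamma (t + 1)
        - x ^ t * Real.exp (-x) * deriv Real.Gamma (t + 1)) / Real.Gamma (t + 1) ^ 2
      = (Real.log x - digamma (t + 1)) * plik x t := by
    rw [hψ]; unfold plik; field_simp
  exact hv ▸ hq

lemma integ_aux (px : ℝ → ℝ) (t : ℝ)
    (hnn : ∀ x ∈ Set.Ioi (0:ℝ), 0 ≤ px x) (ht : -1 < t)
    (hint : ∀ k : ℕ, IntegrableOn (fun x => |Real.log x| ^ k * plik x t * px x) (Set.Ioi 0))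
    (j : ℕ) (c : ℝ) :
    IntegrableOn (fun x => (Real.log x - c) ^ j * plik x t * px x) (Set.Ioi 0) := by
  have hmeas : AEStronglyMeasurable (fun x => plik x t * px x) (volume.restrict (Ioi 0)) := by
    simpa using (hint 0).aestronglyMeasurable
  refine (((hint j).const_mul (2 ^ j)).add ((hint 0).const_mul (2 ^ j * |c| ^ j))).mono' ?_ ?_
  · have h1 : Measurable fun x : ℝ => (Real.log x - c) ^ j :=
      (Real.measurable_log.sub measurable_const).pow_const j
    have h2 := h1.aestronglyMeasurable.mul hmeas
    simp only [Pi.mul_def, ← mul_assoc] at h2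
    exact h2
  · filter_upwards [ae_restrict_mem measurableSet_Ioi] with x hx
    have hP : 0 ≤ plik x t * px x := mul_nonneg (plik_nonneg hx ht) (hnn x hx)
    have h1 : ‖(Real.log x - c) ^ j * plik x t * px x‖
        = |Real.log x - c| ^ j * (plik x t * px x) := by
      rw [Real.norm_eq_abs, mul_assoc, abs_mul, abs_pow, abs_of_nonneg hP]
    rw [h1]
    have h2 : |Real.log x - c| ≤ |Real.log x| + |c| := by
      calc |Real.log x - c| = |Real.log x + (-c)| := by rw [sub_eq_add_neg]
        _ ≤ |Real.log x| + |(-c)| := abs_add_le _ _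
        _ = |Real.log x| + |c| := by rw [abs_neg]
    have h3 : |Real.log x - c| ^ j ≤ 2 ^ j * (|Real.log x| ^ j + |c| ^ j) := by
      have hmax : |Real.log x - c| ≤ 2 * max |Real.log x| |c| := by
        calc |Real.log x - c| ≤ |Real.log x| + |c| := h2
          _ ≤ max |Real.log x| |c| + max |Real.log x| |c| :=
              add_le_add (le_max_left _ _) (le_max_right _ _)
          _ = 2 * max |Real.log x| |c| := (two_mul _).symm
      calc |Real.log x - c| ^ j ≤ (2 * max |Real.log x| |c|) ^ j :=
            pow_le_pow_left₀ (abs_nonneg _) hmax j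
        _ = 2 ^ j * (max |Real.log x| |c|) ^ j := mul_pow _ _ _
        _ ≤ 2 ^ j * (|Real.log x| ^ j + |c| ^ j) := by
            have : (max |Real.log x| |c|) ^ j ≤ |Real.log x| ^ j + |c| ^ j := by
              rcases le_total |Real.log x| |c| with h | h
              · rw [max_eq_right h]; exact le_add_of_nonneg_left (by positivity)
              · rw [max_eq_left h]; exact le_add_of_nonneg_right (by positivity)
            exact mul_le_mul_of_nonneg_left this (by positivity)
    calc |Real.log x - c| ^ j * (plik x t * px x)
        ≤ (2 ^ j * (|Real.log x| ^ j + |c| ^ j)) * (plik x t * px x) :=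
          mul_le_mul_of_nonneg_right h3 hP
      _ = 2 ^ j * (|Real.log x| ^ j * plik x t * px x)
          + 2 ^ j * |c| ^ j * (|Real.log x| ^ 0 * plik x t * px x) := by
          simp only [pow_zero, one_mul]; ring

/-- All posterior central moments of log x are determined by the posterior mean
mu_1 = E[log x | y] and its derivatives: mu_2 = mu_1', mu_3 = mu_1'', and
mu_{k+1} = mu_k' + k mu_2 mu_{k-1} for k >= 3. -/
theorem poisson_moments_from_posterior_mean (px : ℝ → ℝ)
    (hnn : ∀ x ∈ Set.Ioi (0:ℝ), 0 ≤ px x)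
    (hpos : ∀ t : ℝ, -1 < t → 0 < marg px t)
    (hint : ∀ (t : ℝ), -1 < t → ∀ k : ℕ,
      IntegrableOn (fun x => |Real.log x| ^ k * plik x t * px x) (Set.Ioi 0))
    -- differentiation under the integral sign for the marginal, at every point:
    (hmargD : ∀ t : ℝ, -1 < t → HasDerivAt (marg px)
      (∫ x in Set.Ioi (0:ℝ), (Real.log x - digamma (t + 1)) * plik x t * px x) t)
    -- differentiation under the integral sign for the numerator of mu_1:
    (hND : ∀ t : ℝ, -1 < t →
      HasDerivAt (fun s => ∫ x in Set.Ioi (0:ℝ), Real.log x * plik x s * px x)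
      (∫ x in Set.Ioi (0:ℝ),
        Real.log x * (Real.log x - digamma (t + 1)) * plik x t * px x) t)
    -- differentiation under the integral sign for every centered moment:
    (hDUI : ∀ (j : ℕ) (t : ℝ), -1 < t → HasDerivAt
      (fun s => ∫ x in Set.Ioi (0:ℝ),
        (Real.log x - postExp px Real.log s) ^ j * plik x s * px x)
      (∫ x in Set.Ioi (0:ℝ),
        deriv (fun s => (Real.log x - postExp px Real.log s) ^ j * plik x s * px x) t) t) :
    ∀ y : ℝ, -1 < y →
      (deriv (postExp px Real.log) y = cmom px 2 y ∧
       deriv (deriv (postExp px Real.log)) y = cmom px 3 y ∧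
       ∀ k : ℕ, 3 ≤ k →
         cmom px (k + 1) y
           = deriv (cmom px k) y + (k : ℝ) * cmom px 2 y * cmom px (k - 1) y) := by
  have hIc : ∀ t : ℝ, -1 < t → ∀ (j : ℕ) (c : ℝ),
      IntegrableOn (fun x => (Real.log x - c) ^ j * plik x t * px x) (Set.Ioi 0) :=
    fun t ht j c => integ_aux px t hnn ht (hint t ht) j c
  have hIk : ∀ t : ℝ, -1 < t → ∀ k : ℕ,
      IntegrableOn (fun x => Real.log x ^ k * plik x t * px x) (Set.Ioi 0) := by
    intro t ht k; simpa using hIc t ht k 0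
  have hI1 : ∀ t : ℝ, -1 < t →
      IntegrableOn (fun x => Real.log x * plik x t * px x) (Set.Ioi 0) := by
    intro t ht; simpa using hIc t ht 1 0
  have hI0 : ∀ t : ℝ, -1 < t → IntegrableOn (fun x => plik x t * px x) (Set.Ioi 0) := by
    intro t ht; simpa using hIc t ht 0 0
  -- derivative of the marginal
  have hm' : ∀ t : ℝ, -1 < t → HasDerivAt (marg px)
      ((postExp px Real.log t - digamma (t + 1)) * marg px t) t := by
    intro t ht
    have hm0 := (hpos t ht).ne'
    have e1 : (∫ x in Ioi (0:ℝ), (Real.log x - digamma (t + 1)) * plik x t * px x)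
        = (∫ x in Ioi (0:ℝ), Real.log x * plik x t * px x)
          - digamma (t + 1) * marg px t := by
      rw [setIntegral_congr_fun measurableSet_Ioi
          (show EqOn (fun x => (Real.log x - digamma (t + 1)) * plik x t * px x)
            (fun x => Real.log x * plik x t * px x - digamma (t + 1) * (plik x t * px x)) (Ioi 0)
            from fun x _ => by ring),
        integral_sub (hI1 t ht) ((hI0 t ht).const_mul _), integral_const_mul]
      rfl
    have e2 : (∫ x in Ioi (0:ℝ), Real.log x * plik x t * px x)
          - digamma (t + 1) * marg px t
        = (postExp px Real.log t - digamma (t + 1)) * marg px t := by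
      rw [show postExp px Real.log t
          = (∫ x in Ioi (0:ℝ), Real.log x * plik x t * px x) / marg px t from rfl]
      field_simp
    have h := hmargD t ht
    rw [e1, e2] at h
    exact h
  -- derivative of the posterior mean is the posterior variance
  have key : ∀ t : ℝ, -1 < t → HasDerivAt (postExp px Real.log) (cmom px 2 t) t := by
    intro t ht
    have hm0 := (hpos t ht).ne'
    have hN : HasDerivAt (fun s => ∫ x in Ioi (0:ℝ), Real.log x * plik x s * px x)
        ((∫ x in Ioi (0:ℝ), Real.log x ^ 2 * plik x t * px x)
          - digamma (t + 1) * ∫ x in Ioi (0:ℝ), Real.log x * plik x t * px x) t := by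
      have e1 : (∫ x in Ioi (0:ℝ),
            Real.log x * (Real.log x - digamma (t + 1)) * plik x t * px x)
          = (∫ x in Ioi (0:ℝ), Real.log x ^ 2 * plik x t * px x)
            - digamma (t + 1) * ∫ x in Ioi (0:ℝ), Real.log x * plik x t * px x := by
        rw [setIntegral_congr_fun measurableSet_Ioi
            (show EqOn (fun x => Real.log x * (Real.log x - digamma (t + 1)) * plik x t * px x)
              (fun x => Real.log x ^ 2 * plik x t * px x
                - digamma (t + 1) * (Real.log x * plik x t * px x)) (Ioi 0)
              from fun x _ => by ring),
          integral_sub (hIk t ht 2) ((hI1 t ht).const_mul _), integral_const_mul]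
      have h := hND t ht
      rw [e1] at h
      exact h
    have hdiv := hN.div (hm' t ht) hm0
    have eM2 : (∫ x in Ioi (0:ℝ),
          (Real.log x - postExp px Real.log t) ^ 2 * plik x t * px x)
        = (∫ x in Ioi (0:ℝ), Real.log x ^ 2 * plik x t * px x)
          - 2 * postExp px Real.log t * (∫ x in Ioi (0:ℝ), Real.log x * plik x t * px x)
          + (postExp px Real.log t) ^ 2 * marg px t := by
      have hsub : IntegrableOn (fun x => Real.log x ^ 2 * plik x t * px x
          - 2 * postExp px Real.log t * (Real.log x * plik x t * px x)) (Set.Ioi 0) :=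
        (hIk t ht 2).sub ((hI1 t ht).const_mul _)
      rw [setIntegral_congr_fun measurableSet_Ioi
          (show EqOn (fun x => (Real.log x - postExp px Real.log t) ^ 2 * plik x t * px x)
            (fun x => Real.log x ^ 2 * plik x t * px x
              - 2 * postExp px Real.log t * (Real.log x * plik x t * px x)
              + (postExp px Real.log t) ^ 2 * (plik x t * px x)) (Ioi 0)
            from fun x _ => by ring),
        integral_add hsub ((hI0 t ht).const_mul _),
        integral_sub (hIk t ht 2) ((hI1 t ht).const_mul _), integral_const_mul,
        integral_const_mul]
      rfl
    have hv : cmom px 2 t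
        = (((∫ x in Ioi (0:ℝ), Real.log x ^ 2 * plik x t * px x)
            - digamma (t + 1) * ∫ x in Ioi (0:ℝ), Real.log x * plik x t * px x) * marg px t
          - (∫ x in Ioi (0:ℝ), Real.log x * plik x t * px x)
            * ((postExp px Real.log t - digamma (t + 1)) * marg px t)) / marg px t ^ 2 := by
      rw [show cmom px 2 t = (∫ x in Ioi (0:ℝ),
            (Real.log x - postExp px Real.log t) ^ 2 * plik x t * px x) / marg px t from rfl,
        eM2,
        show postExp px Real.log t
          = (∫ x in Ioi (0:ℝ), Real.log x * plik x t * px x) / marg px t from rfl]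
      field_simp
      ring
    rw [hv]
    exact hdiv
  -- the first central moment vanishes
  have czero : ∀ t : ℝ, -1 < t → cmom px 1 t = 0 := by
    intro t ht
    have hm0 := (hpos t ht).ne'
    have e1 : (∫ x in Ioi (0:ℝ),
          (Real.log x - postExp px Real.log t) ^ 1 * plik x t * px x)
        = (∫ x in Ioi (0:ℝ), Real.log x * plik x t * px x)
          - postExp px Real.log t * marg px t := by
      rw [setIntegral_congr_fun measurableSet_Ioi
          (show EqOn (fun x => (Real.log x - postExp px Real.log t) ^ 1 * plik x t * px x)
            (fun x => Real.log x * plik x t * px x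
              - postExp px Real.log t * (plik x t * px x)) (Ioi 0)
            from fun x _ => by ring),
        integral_sub (hI1 t ht) ((hI0 t ht).const_mul _), integral_const_mul]
      rfl
    rw [show cmom px 1 t = (∫ x in Ioi (0:ℝ),
          (Real.log x - postExp px Real.log t) ^ 1 * plik x t * px x) / marg px t from rfl,
      e1,
      show postExp px Real.log t
        = (∫ x in Ioi (0:ℝ), Real.log x * plik x t * px x) / marg px t from rfl,
      div_mul_cancel₀ _ hm0, sub_self, zero_div]
  -- the recursion for central moments
  have hrec : ∀ (j : ℕ) (t : ℝ), -1 < t → HasDerivAt (cmom px (j + 1))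
      (cmom px (j + 2) t - ((j : ℝ) + 1) * cmom px 2 t * cmom px j t) t := by
    intro j t ht
    have hm0 := (hpos t ht).ne'
    have hμ := key t ht
    have h_eq : EqOn
        (fun x => deriv (fun s =>
          (Real.log x - postExp px Real.log s) ^ (j + 1) * plik x s * px x) t)
        (fun x => (-(((j : ℝ) + 1) * cmom px 2 t))
            * ((Real.log x - postExp px Real.log t) ^ j * plik x t * px x)
          + ((Real.log x - postExp px Real.log t) ^ (j + 2) * plik x t * px x
            + (postExp px Real.log t - digamma (t + 1))
              * ((Real.log x - postExp px Real.log t) ^ (j + 1) * plik x t * px x)))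
        (Ioi 0) := by
      intro x hx
      have hd : HasDerivAt (fun s =>
          (Real.log x - postExp px Real.log s) ^ (j + 1) * plik x s * px x)
          ((((j + 1 : ℕ) : ℝ) * (Real.log x - postExp px Real.log t) ^ j
              * (0 - cmom px 2 t) * plik x t
            + (Real.log x - postExp px Real.log t) ^ (j + 1)
              * ((Real.log x - digamma (t + 1)) * plik x t)) * px x) t :=
        ((((hasDerivAt_const t (Real.log x)).sub hμ).pow (j + 1)).mul
          (plik_hasDerivAt x t hx ht)).mul_const (px x)
      show deriv (fun s =>
          (Real.log x - postExp px Real.log s) ^ (j + 1) * plik x s * px x) t = _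
      rw [hd.deriv]
      push_cast
      ring
    have hMder := hDUI (j + 1) t ht
    have hadd : IntegrableOn (fun x =>
        (Real.log x - postExp px Real.log t) ^ (j + 2) * plik x t * px x
        + (postExp px Real.log t - digamma (t + 1))
          * ((Real.log x - postExp px Real.log t) ^ (j + 1) * plik x t * px x)) (Set.Ioi 0) :=
      (hIc t ht (j + 2) _).add ((hIc t ht (j + 1) _).const_mul _)
    rw [setIntegral_congr_fun measurableSet_Ioi h_eq,
      integral_add ((hIc t ht j _).const_mul _) hadd,
      integral_const_mul,
      integral_add (hIc t ht (j + 2) _) ((hIc t ht (j + 1) _).const_mul _),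
      integral_const_mul] at hMder
    have hdiv := hMder.div (hm' t ht) hm0
    have hv : cmom px (j + 2) t - ((j : ℝ) + 1) * cmom px 2 t * cmom px j t
        = (((-(((j : ℝ) + 1) * cmom px 2 t))
            * (∫ x in Ioi (0:ℝ), (Real.log x - postExp px Real.log t) ^ j * plik x t * px x)
          + ((∫ x in Ioi (0:ℝ),
              (Real.log x - postExp px Real.log t) ^ (j + 2) * plik x t * px x)
            + (postExp px Real.log t - digamma (t + 1))
              * (∫ x in Ioi (0:ℝ),
                (Real.log x - postExp px Real.log t) ^ (j + 1) * plik x t * px x)))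
            * marg px t
          - (∫ x in Ioi (0:ℝ),
              (Real.log x - postExp px Real.log t) ^ (j + 1) * plik x t * px x)
            * ((postExp px Real.log t - digamma (t + 1)) * marg px t)) / marg px t ^ 2 := by
      rw [show cmom px (j + 2) t = (∫ x in Ioi (0:ℝ),
            (Real.log x - postExp px Real.log t) ^ (j + 2) * plik x t * px x) / marg px t
          from rfl,
        show cmom px j t = (∫ x in Ioi (0:ℝ),
            (Real.log x - postExp px Real.log t) ^ j * plik x t * px x) / marg px t from rfl]
      field_simp
      ring
    rw [hv]
    exact hdiv
  -- assembly
  intro y hy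
  refine ⟨(key y hy).deriv, ?_, ?_⟩
  · have h2 : deriv (postExp px Real.log) =ᶠ[nhds y] cmom px 2 := by
      filter_upwards [isOpen_Ioi.mem_nhds (show y ∈ Ioi (-1:ℝ) from hy)] with t ht
      exact (key t ht).deriv
    rw [h2.deriv_eq]
    have h3 := (hrec 1 y hy).deriv
    rw [czero y hy] at h3
    norm_num at h3
    exact h3
  · intro k hk
    obtain ⟨j, hj⟩ := Nat.exists_eq_add_of_le hk
    have hj' : k = j + 3 := by omega
    subst hj'
    have h4 : deriv (cmom px (j + 3)) y
        = cmom px (j + 4) y - (((j + 2 : ℕ) : ℝ) + 1) * cmom px 2 y * cmom px (j + 2) y :=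
      (hrec (j + 2) y hy).deriv
    show cmom px (j + 4) y
      = deriv (cmom px (j + 3)) y + ((j + 3 : ℕ) : ℝ) * cmom px 2 y * cmom px (j + 2) y
    rw [h4]
    push_cast
    ring
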